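/- Let V be a finite set, let B ⊆ 2^V be a nonempty Sperner hypergraph, and let h be a pure Horn function on V with h ≤ Φ_B (every true assignment of h is a true assignment of Φ_B). Then K(h) ≠ B if and only if there exist a set A ⊆ V, an element v ∈ V∖A such that A → v is an implicate of h, and a minimal transversal T ∈ B^d with T ∩ A = ∅ and v ∈ T. -/

import Mathlib

open scoped Classical

variable {V : Type*} [Fintype V] [DecidableEq V]

/-- A Sperner hypergraph: no hyperedge contains another one. -/
def SpernerFam (𝓑 : Set (Finset V)) : Prop :=
  ∀ B₁ ∈ 𝓑, ∀ B₂ ∈ 𝓑, B₁ ⊆ B₂ → B₁ = B₂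

/-- `T` is a transversal of `𝓑` if it meets every hyperedge. -/
def IsTransversal (𝓑 : Set (Finset V)) (T : Finset V) : Prop :=
  ∀ B ∈ 𝓑, (T ∩ B).Nonempty

/-- `𝓑^d`: the family of inclusion-minimal transversals of `𝓑`. -/
def dualHyp (𝓑 : Set (Finset V)) : Set (Finset V) :=
  {T | IsTransversal 𝓑 T ∧ ∀ T', IsTransversal 𝓑 T' → T' ⊆ T → T' = T}

/-- A Boolean function `h` on `V` is pure Horn if its set of true assignments contains the
all-true assignment and is closed under componentwise AND. -/
def PureHorn (h : (V → Bool) → Bool) : Prop :=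
  h (fun _ => true) = true ∧
  ∀ x y : V → Bool, h x = true → h y = true → h (fun v => x v && y v) = true

/-- The clause `A → v` is an implicate of `h`: every true assignment of `h` that is true on
every element of `A` is also true at `v`. -/
def Implicate (h : (V → Bool) → Bool) (A : Finset V) (v : V) : Prop :=
  ∀ x : V → Bool, h x = true → (∀ a ∈ A, x a = true) → x v = true

/-- `K` is a key of `h` if `K → v` is an implicate of `h` for every `v ∈ V \ K`. -/
def IsKey (h : (V → Bool) → Bool) (K : Finset V) : Prop :=
  ∀ v ∉ K, Implicate h K v

/-- `𝒦(h)`: the family of inclusion-minimal keys of `h`. -/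
def minKeys (h : (V → Bool) → Bool) : Set (Finset V) :=
  {K | IsKey h K ∧ ∀ K', IsKey h K' → K' ⊆ K → K' = K}

/-- `Φ_𝓑`: the pure Horn function whose true assignments are exactly those `x` such that for
every `B ∈ 𝓑` on which `x` is identically true, `x` is identically true on all of `V`. -/
noncomputable def PhiB (𝓑 : Set (Finset V)) : (V → Bool) → Bool :=
  fun x => decide (∀ B ∈ 𝓑, (∀ u ∈ B, x u = true) → ∀ v : V, x v = true)

lemma exists_min_pred (P : Finset V → Prop) (T : Finset V) (hT : P T) :
    ∃ T', T' ⊆ T ∧ P T' ∧ ∀ T'', P T'' → T'' ⊆ T' → T'' = T' := by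
  induction T using Finset.strongInductionOn with
  | _ T ih =>
    by_cases hmin : ∀ T'', P T'' → T'' ⊆ T → T'' = T
    · exact ⟨T, subset_rfl, hT, hmin⟩
    · push_neg at hmin
      obtain ⟨T'', hP, hsub, hne⟩ := hmin
      have hss : T'' ⊂ T := hsub.ssubset_of_ne hne
      obtain ⟨T', h1, h2, h3⟩ := ih T'' hss hP
      exact ⟨T', h1.trans hss.subset, h2, h3⟩

lemma isKey_mono {h : (V → Bool) → Bool} {K K' : Finset V}
    (hK : IsKey h K) (hs : K ⊆ K') : IsKey h K' := by
  intro v hv x hx hall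
  exact hK v (fun hvK => hv (hs hvK)) x hx (fun a ha => hall a (hs ha))

lemma mem_isKey {𝓑 : Set (Finset V)} {h : (V → Bool) → Bool}
    (hle : ∀ x : V → Bool, h x = true → PhiB 𝓑 x = true)
    {B : Finset V} (hB : B ∈ 𝓑) : IsKey h B := by
  intro v _ x hx hall
  have := hle x hx
  simp only [PhiB, decide_eq_true_eq] at this
  exact this B hB hall v

/-- For a nonempty Sperner hypergraph `𝓑` and a pure Horn function `h ≤ Φ_𝓑`:
`𝒦(h) ≠ 𝓑` iff there are an implicate `A → v` of `h` and a minimal transversal `T ∈ 𝓑^d`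
with `T ∩ A = ∅` and `v ∈ T`. -/
theorem stmt2 (𝓑 : Set (Finset V)) (hne : 𝓑.Nonempty) (hSp : SpernerFam 𝓑)
    (h : (V → Bool) → Bool) (hh : PureHorn h)
    (hle : ∀ x : V → Bool, h x = true → PhiB 𝓑 x = true) :
    minKeys h ≠ 𝓑 ↔
      ∃ (A : Finset V) (v : V), v ∉ A ∧ Implicate h A v ∧
        ∃ T ∈ dualHyp 𝓑, T ∩ A = ∅ ∧ v ∈ T := by
  constructor
  · -- ⇒ : by contraposition, if no such (A,v,T) exists then minKeys h = 𝓑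
    intro hneq
    by_contra hcon
    push_neg at hcon
    apply hneq
    -- every key of h contains a hyperedge
    have step2 : ∀ K : Finset V, IsKey h K → ∃ B ∈ 𝓑, B ⊆ K := by
      intro K hK
      by_contra hno
      push_neg at hno
      have hT0 : IsTransversal 𝓑 Kᶜ := by
        intro B hB
        obtain ⟨b, hbB, hbK⟩ := Finset.not_subset.mp (hno B hB)
        exact ⟨b, Finset.mem_inter.mpr ⟨Finset.mem_compl.mpr hbK, hbB⟩⟩
      obtain ⟨T, hTsub, hTtr, hTmin⟩ := exists_min_pred (IsTransversal 𝓑) Kᶜ hT0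
      obtain ⟨B₁, hB₁⟩ := hne
      obtain ⟨v, hv⟩ := hTtr B₁ hB₁
      have hvT : v ∈ T := (Finset.mem_inter.mp hv).1
      have hvK : v ∉ K := Finset.mem_compl.mp (hTsub hvT)
      have hTK : T ∩ K = ∅ := by
        apply Finset.eq_empty_iff_forall_notMem.mpr
        intro a ha
        have := Finset.mem_inter.mp ha
        exact Finset.mem_compl.mp (hTsub this.1) this.2
      exact (hcon K v hvK (hK v hvK) T ⟨hTtr, hTmin⟩ hTK) hvT
    ext K
    constructor
    · rintro ⟨hK, hKmin⟩
      obtain ⟨B, hB, hBK⟩ := step2 K hK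
      rwa [← hKmin B (mem_isKey hle hB) hBK]
    · intro hK
      refine ⟨mem_isKey hle hK, ?_⟩
      intro K' hK' hsub
      obtain ⟨B', hB', hB'K'⟩ := step2 K' hK'
      have : B' = K := hSp B' hB' K hK (hB'K'.trans hsub)
      exact hsub.antisymm (this ▸ hB'K')
  · -- ⇐
    rintro ⟨A, v, hvA, hImp, T, ⟨hTtr, hTmin⟩, hTA, hvT⟩ heq
    -- K = Tᶜ is a key of h
    set K := Tᶜ with hKdef
    have hAK : A ⊆ K := by
      intro a ha
      refine Finset.mem_compl.mpr (fun haT => ?_)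
      exact Finset.eq_empty_iff_forall_notMem.mp hTA a (Finset.mem_inter.mpr ⟨haT, ha⟩)
    have hvK : v ∉ K := by simp [hKdef, hvT]
    -- T \ {v} is not a transversal, yielding B₀ with B₀ ⊆ K ∪ {v}
    have hnt : ¬ IsTransversal 𝓑 (T \ {v}) := by
      intro hcontra
      have heqT := hTmin (T \ {v}) hcontra (Finset.sdiff_subset)
      have hv' : v ∈ T \ {v} := by rw [heqT]; exact hvT
      simp at hv'
    have hex : ∃ B₀ ∈ 𝓑, (T \ {v}) ∩ B₀ = ∅ := by
      by_contra hc
      push_neg at hc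
      exact hnt (fun B hB => hc B hB)
    obtain ⟨B₀, hB₀, hB₀e⟩ := hex
    have hB₀sub : B₀ ⊆ K ∪ {v} := by
      intro b hb
      by_cases hbT : b ∈ T
      · rcases eq_or_ne b v with rfl | hbv
        · simp
        · exfalso
          apply Finset.eq_empty_iff_forall_notMem.mp hB₀e b
          exact Finset.mem_inter.mpr ⟨Finset.mem_sdiff.mpr ⟨hbT, by simp [hbv]⟩, hb⟩
      · exact Finset.mem_union_left _ (Finset.mem_compl.mpr hbT)
    have hKey : IsKey h K := by
      intro u hu x hx hxK
      have hxv : x v = true := hImp x hx (fun a ha => hxK a (hAK ha))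
      rcases eq_or_ne u v with rfl | huv
      · exact hxv
      · have hKvkey : IsKey h (K ∪ {v}) := isKey_mono (mem_isKey hle hB₀) hB₀sub
        refine hKvkey u (by simp [hu, huv]) x hx ?_
        intro a ha
        rcases Finset.mem_union.mp ha with h1 | h2
        · exact hxK a h1
        · simp at h2; rwa [h2]
    obtain ⟨K', hK'sub, hK'key, hK'min⟩ := exists_min_pred (IsKey h) K hKey
    have : K' ∈ 𝓑 := heq ▸ (⟨hK'key, hK'min⟩ : K' ∈ minKeys h)
    obtain ⟨t, ht⟩ := hTtr K' this
    have := Finset.mem_inter.mp ht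
    exact Finset.mem_compl.mp (hK'sub this.2) this.1
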